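/- If Λ : ℂ → ℂ is differentiable and satisfies Ω̄(x) Λ'(x) = Ω0(x) − Ω1(x) Λ(x) + Ω2(x) Λ(x)^2 for all x in an open set U, and Λ has the product representation Λ(x) = Λ0 · ∏_{j=1}^{L} sinh(u_j − x)/sinh(u_j) on U, then Λ satisfies the quadratic algebraic equation Ω2(x) Λ(x)^2 + [Ω̄(x) F(x) − Ω1(x)] Λ(x) + Ω0(x) = 0 on U, where F(x) = ∑_{j=1}^{L} coth(u_j − x). -/

import Mathlib

open Complex

theorem stmt2 (Ωb Ω0 Ω1 Ω2 : ℂ → ℂ) (L : ℕ) (hL : 1 ≤ L) (u : Fin L → ℂ)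
    (hu : ∀ j, Complex.sinh (u j) ≠ 0) (Λ0 : ℂ) (Λ : ℂ → ℂ)
    (U : Set ℂ) (hU : IsOpen U)
    (havoid : ∀ x ∈ U, ∀ j, Complex.sinh (u j - x) ≠ 0)
    (hdiff : ∀ x ∈ U, DifferentiableAt ℂ Λ x)
    (hRic : ∀ x ∈ U, Ωb x * deriv Λ x = Ω0 x - Ω1 x * Λ x + Ω2 x * Λ x ^ 2)
    (hrep : ∀ x ∈ U, Λ x = Λ0 * ∏ j, Complex.sinh (u j - x) / Complex.sinh (u j)) :
    ∀ x ∈ U,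
      Ω2 x * Λ x ^ 2 +
        (Ωb x * (∑ j, Complex.cosh (u j - x) / Complex.sinh (u j - x)) - Ω1 x) * Λ x +
        Ω0 x = 0 := by
  intro x hx
  -- derivative of each factor
  have hfac : ∀ j : Fin L, HasDerivAt (fun y => Complex.sinh (u j - y) / Complex.sinh (u j))
      (-Complex.cosh (u j - x) / Complex.sinh (u j)) x := by
    intro j
    have h1 : HasDerivAt (fun y : ℂ => u j - y) (-1) x := by
      simpa using (hasDerivAt_const x (u j)).fun_sub (hasDerivAt_id x)
    have h2 : HasDerivAt (fun y => Complex.sinh (u j - y)) (Complex.cosh (u j - x) * (-1)) x :=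
      (Complex.hasDerivAt_sinh _).comp x h1
    simpa [mul_comm, div_eq_mul_inv, neg_div, mul_assoc] using h2.div_const (Complex.sinh (u j))
  have hprod : HasDerivAt (fun y => Λ0 * ∏ j, Complex.sinh (u j - y) / Complex.sinh (u j))
      (Λ0 * ∑ i, (∏ j ∈ Finset.univ.erase i, Complex.sinh (u j - x) / Complex.sinh (u j)) •
        (-Complex.cosh (u i - x) / Complex.sinh (u i))) x := by
    exact (HasDerivAt.fun_finsetProd (fun i _ => hfac i)).const_mul Λ0
  -- Λ equals the product eventually, so same deriv
  have heq : Λ =ᶠ[nhds x] fun y => Λ0 * ∏ j, Complex.sinh (u j - y) / Complex.sinh (u j) := by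
    filter_upwards [hU.mem_nhds hx] with y hy using hrep y hy
  have hderiv : deriv Λ x = Λ0 * ∑ i, (∏ j ∈ Finset.univ.erase i,
      Complex.sinh (u j - x) / Complex.sinh (u j)) •
      (-Complex.cosh (u i - x) / Complex.sinh (u i)) := by
    rw [Filter.EventuallyEq.deriv_eq heq, hprod.deriv]
  -- the sum equals -F * ∏
  have hsum : (∑ i, (∏ j ∈ Finset.univ.erase i,
        Complex.sinh (u j - x) / Complex.sinh (u j)) •
        (-Complex.cosh (u i - x) / Complex.sinh (u i)))
      = -(∑ j, Complex.cosh (u j - x) / Complex.sinh (u j - x)) *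
        ∏ j, Complex.sinh (u j - x) / Complex.sinh (u j) := by
    rw [neg_mul, Finset.sum_mul, ← Finset.sum_neg_distrib]
    refine Finset.sum_congr rfl fun i _ => ?_
    have h1 : (Complex.sinh (u i - x) / Complex.sinh (u i)) *
        ∏ j ∈ Finset.univ.erase i, Complex.sinh (u j - x) / Complex.sinh (u j)
        = ∏ j, Complex.sinh (u j - x) / Complex.sinh (u j) :=
      Finset.mul_prod_erase Finset.univ (fun j => Complex.sinh (u j - x) / Complex.sinh (u j)) (Finset.mem_univ i)
    have h2 : Complex.cosh (u i - x) / Complex.sinh (u i - x) *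
        (Complex.sinh (u i - x) / Complex.sinh (u i)) =
        Complex.cosh (u i - x) / Complex.sinh (u i) := by
      rw [div_mul_div_comm, mul_comm (Complex.sinh (u i - x)) (Complex.sinh (u i))]
      exact mul_div_mul_right _ _ (havoid x hx i)
    rw [smul_eq_mul, ← h1, ← mul_assoc, h2]; ring
  have hF : deriv Λ x = -(∑ j, Complex.cosh (u j - x) / Complex.sinh (u j - x)) * Λ x := by
    rw [hderiv, hsum, hrep x hx]; ring
  have := hRic x hx
  rw [hF] at this
  linear_combination -this
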